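/- No omnitig traverses a join arc twice, and no omnitig traverses a split arc twice. -/

import Mathlib

/-- A directed multigraph: arcs `E` with tail and head maps into nodes `V`. -/
structure MultiDigraph (V E : Type) where
  tail : E → V
  head : E → V

namespace MultiDigraph

variable {V E : Type} (G : MultiDigraph V E)

/-- A walk is a (possibly empty) list of arcs that chain head-to-tail. -/
def IsWalk (W : List E) : Prop := W.Chain' (fun a b => G.head a = G.tail b)

/-- The node sequence `v₀, v₁, …, v_ℓ` of a nonempty walk (empty for the empty walk). -/
def nodes : List E → List V
  | [] => []
  | e :: W => G.tail e :: (e :: W).map G.head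

/-- The start node of a nonempty walk. -/
def src (W : List E) : Option V := W.head?.map G.tail

/-- The end node of a nonempty walk. -/
def dst (W : List E) : Option V := W.getLast?.map G.head

/-- A path: a walk whose nodes are all distinct, except that the last node may
equal the first one (closed path). -/
def IsPath (W : List E) : Prop :=
  G.IsWalk W ∧ (G.nodes W).dropLast.Nodup ∧ (G.nodes W).tail.Nodup

/-- `P` is a forbidden path for the pair of arcs `(eR, eL)`: a non-empty path from
`tail eR` to `head eL` whose first arc differs from `eR` and last arc differs from `eL`. -/
def ForbiddenPath (eR eL : E) (P : List E) : Prop :=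
  G.IsPath P ∧ P ≠ [] ∧ G.src P = some (G.tail eR) ∧ G.dst P = some (G.head eL) ∧
    P.head? ≠ some eR ∧ P.getLast? ≠ some eL

/-- A walk `e₀ … e_ℓ` is an omnitig if for all `1 ≤ i ≤ j ≤ ℓ` there is no
forbidden path from `tail e_j` to `head e_{i-1}`. -/
def IsOmnitig (W : List E) : Prop :=
  G.IsWalk W ∧ ∀ i j : ℕ, (hi : 1 ≤ i) → (hij : i ≤ j) → (hj : j < W.length) →
    ¬ ∃ P, G.ForbiddenPath (W[j]'hj) (W[i-1]'(by omega)) P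

/-- `u` reaches `v` by a (possibly empty) walk. -/
def Reaches (u v : V) : Prop :=
  u = v ∨ ∃ W, G.IsWalk W ∧ G.src W = some u ∧ G.dst W = some v

def StronglyConnected : Prop := ∀ u v : V, G.Reaches u v

/-- In-degree of a node. -/
noncomputable def inDeg (v : V) : ℕ := Nat.card {e : E // G.head e = v}

/-- Out-degree of a node. -/
noncomputable def outDeg (v : V) : ℕ := Nat.card {e : E // G.tail e = v}

def JoinArc (e : E) : Prop := 1 < G.inDeg (G.head e)

def SplitArc (e : E) : Prop := 1 < G.outDeg (G.tail e)

def Bivalent (v : V) : Prop := 1 < G.inDeg v ∧ 1 < G.outDeg v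

def JoinFree (W : List E) : Prop := ∀ e ∈ W, ¬ G.JoinArc e

def SplitFree (W : List E) : Prop := ∀ e ∈ W, ¬ G.SplitArc e

/-- A closed walk covering every arc at least once. -/
def IsClosedArcCovering (W : List E) : Prop :=
  G.IsWalk W ∧ W ≠ [] ∧ G.src W = G.dst W ∧ ∀ e : E, e ∈ W

/-- `W'` occurs as a cyclic (wrap-around) subwalk of the closed walk `W`. -/
def IsCyclicSubwalk (W' W : List E) : Prop :=
  ∃ i : ℕ, ∀ k : ℕ, k < W'.length → W'[k]? = W[(i + k) % W.length]?

/-- The graph consists of a single closed path through all nodes and arcs. -/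
def IsClosedPathGraph : Prop :=
  ∃ C : List E, G.IsPath C ∧ C ≠ [] ∧ G.src C = G.dst C ∧ C.Nodup ∧
    (∀ e : E, e ∈ C) ∧ (∀ v : V, v ∈ G.nodes C)

/-- Compressed graph: no biunivocal nodes and no biunivocal arcs. -/
def Compressed : Prop :=
  (∀ v : V, 1 < G.inDeg v ∨ 1 < G.outDeg v) ∧
  (∀ e : E, G.JoinArc e ∨ G.SplitArc e)

/-- `u` reaches `v` by a (possibly empty) path avoiding the arc `f`. -/
def ReachesAvoid (f : E) (u v : V) : Prop :=
  u = v ∨ ∃ P, G.IsPath P ∧ f ∉ P ∧ G.src P = some u ∧ G.dst P = some v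

/-- A maximal omnitig: an omnitig extendable neither to the left nor to the right. -/
def IsMaximalOmnitig (W : List E) : Prop :=
  G.IsOmnitig W ∧ (∀ e : E, ¬ G.IsOmnitig (e :: W)) ∧ (∀ e : E, ¬ G.IsOmnitig (W ++ [e]))

/-- The reverse graph. -/
def rev : MultiDigraph V E := ⟨G.head, G.tail⟩

/-- Nodes reachable from `v` by a join-free path. -/
def Rplus (v : V) : Set V :=
  {u | u = v ∨ ∃ W, G.IsPath W ∧ G.JoinFree W ∧ G.src W = some v ∧ G.dst W = some u}

/-- Nodes reaching `v` by a split-free path. -/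
def Rminus (v : V) : Set V :=
  {u | u = v ∨ ∃ W, G.IsPath W ∧ G.SplitFree W ∧ G.src W = some u ∧ G.dst W = some v}

/-- The node set of the macronode centered at `v`. -/
def macronodeSet (v : V) : Set V := G.Rplus v ∪ G.Rminus v

/-- The graph obtained from `G` by contracting the arc `e`. -/
def contract [DecidableEq V] (e : E) : MultiDigraph V {a : E // a ≠ e} where
  tail a := if G.tail a.1 = G.head e then G.tail e else G.tail a.1
  head a := if G.head a.1 = G.head e then G.tail e else G.head a.1

end MultiDigraph

namespace MultiDigraph

variable {V E : Type} {G : MultiDigraph V E}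

lemma walk_step {L : List E} (h : G.IsWalk L) {k : ℕ} (hk : k + 1 < L.length) :
    G.head (L[k]'(by omega)) = G.tail (L[k+1]'hk) := by
  have := List.isChain_iff_getElem.mp h k (by omega)
  simpa using this

lemma nodes_length {L : List E} (hL : L ≠ []) : (G.nodes L).length = L.length + 1 := by
  cases L with
  | nil => simp at hL
  | cons e T => simp [nodes]

lemma nodes_getElem?_zero {L : List E} (hL : L ≠ []) :
    (G.nodes L)[0]? = (L[0]?).map G.tail := by
  cases L with
  | nil => simp at hL
  | cons e T => simp [nodes]

lemma nodes_getElem?_succ (L : List E) (k : ℕ) :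
    (G.nodes L)[k+1]? = (L[k]?).map G.head := by
  cases L with
  | nil => simp [nodes]
  | cons e T =>
    simp only [nodes, List.getElem?_cons_succ, ← List.map_cons (f := G.head) (a := e) (l := T), List.getElem?_map]

lemma src_eq (L : List E) : G.src L = (L[0]?).map G.tail := by
  rw [src, List.head?_eq_getElem?]

lemma dst_eq (L : List E) : G.dst L = (L[L.length-1]?).map G.head := by
  rw [dst, List.getLast?_eq_getElem?]

lemma nodes_getElem?_of_walk {L : List E} (h : G.IsWalk L) {k : ℕ} (hk : k < L.length) :
    (G.nodes L)[k]? = some (G.tail (L[k]'hk)) := by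
  cases k with
  | zero =>
    rw [nodes_getElem?_zero (by intro hc; subst hc; simp at hk), List.getElem?_eq_getElem hk]
    rfl
  | succ m =>
    rw [nodes_getElem?_succ, List.getElem?_eq_getElem (by omega : m < L.length)]
    simp [walk_step h hk]


lemma nodes_getElem?_tail' {L : List E} (h : G.IsWalk L) {k : ℕ} (hk : k < L.length) :
    (G.nodes L)[k]? = (L[k]?).map G.tail := by
  rw [List.getElem?_eq_getElem hk, nodes_getElem?_of_walk h hk]; rfl

lemma nodes_getElem?_head' (L : List E) {k : ℕ} (hk1 : 0 < k) :
    (G.nodes L)[k]? = (L[k-1]?).map G.head := by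
  have h := nodes_getElem?_succ (G := G) L (k-1)
  rw [show k - 1 + 1 = k from by omega] at h
  exact h

lemma exists_nodup_walk : ∀ (n : ℕ) (L : List E), L.length ≤ n → G.IsWalk L → L ≠ [] →
    (G.src L = G.dst L) ∨
      ∃ S : List E, G.IsWalk S ∧ S ≠ [] ∧ G.src S = G.src L ∧ G.dst S = G.dst L ∧
        (G.nodes S).Nodup := by
  intro n
  induction n with
  | zero =>
    intro L hL _ hne
    exact absurd (List.length_eq_zero_iff.mp (Nat.le_zero.mp hL)) hne
  | succ n ih =>
    intro L hlen hw hne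
    by_cases hnd : (G.nodes L).Nodup
    · exact Or.inr ⟨L, hw, hne, rfl, rfl, hnd⟩
    set N := G.nodes L with hN
    have hNlen : N.length = L.length + 1 := nodes_length hne
    have hdup : ∃ i j : ℕ, i < j ∧ j < N.length ∧ N[i]? = N[j]? := by
      rw [List.nodup_iff_injective_get] at hnd
      rw [Function.not_injective_iff] at hnd
      obtain ⟨a, b, hab, hne'⟩ := hnd
      rcases lt_or_gt_of_ne hne' with h | h
      · exact ⟨a, b, h, b.isLt, by simp [List.getElem?_eq_getElem, List.get_eq_getElem] at hab ⊢; exact hab⟩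
      · exact ⟨b, a, h, a.isLt, by simp [List.getElem?_eq_getElem, List.get_eq_getElem] at hab ⊢; exact hab.symm⟩
    obtain ⟨i, j, hij, hjN, hNij⟩ := hdup
    have hjL : j ≤ L.length := by omega
    have hilen : i < L.length := by omega
    by_cases hcase : i = 0 ∧ j = L.length
    · left
      obtain ⟨rfl, rfl⟩ := hcase
      rw [src_eq, dst_eq, ← nodes_getElem?_tail' hw (by omega : 0 < L.length),
        ← nodes_getElem?_head' (G := G) L (by omega : 0 < L.length), hNij]
    -- surgery
    set L' := L.take i ++ L.drop j with hL'
    have hlen' : L'.length = i + (L.length - j) := by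
      simp [hL', List.length_take, List.length_drop]
      omega
    have hne' : L' ≠ [] := by
      apply List.ne_nil_of_length_pos
      rw [hlen']
      omega
    have htl : (L.take i).length = i := by rw [List.length_take]; omega
    have hwalk' : G.IsWalk L' := by
      rw [IsWalk, List.Chain', List.isChain_append]
      refine ⟨hw.take i, hw.drop j, ?_⟩
      intro x hx y hy
      rw [Option.mem_def, List.getLast?_eq_getElem?, htl, List.getElem?_take] at hx
      by_cases hi0 : i = 0
      · subst hi0; simp at hx
      rw [if_pos (by omega)] at hx
      rw [Option.mem_def, List.head?_drop] at hy
      have hjlt : j < L.length := by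
        by_contra hc
        rw [List.getElem?_eq_none (by omega)] at hy
        exact Option.some_ne_none y hy.symm
      have h1 : N[i]? = some (G.head x) := by
        rw [nodes_getElem?_head' (G := G) L (by omega : 0 < i), hx]; rfl
      have h2 : N[j]? = some (G.tail y) := by
        rw [nodes_getElem?_tail' hw hjlt, hy]; rfl
      have := h1.symm.trans (hNij.trans h2)
      exact Option.some_injective _ this
    have hsrc' : G.src L' = G.src L := by
      rw [src_eq, src_eq]
      by_cases hi0 : i = 0
      · subst hi0
        have hjlt : j < L.length := by
          rcases Nat.lt_or_ge j L.length with h | h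
          · exact h
          · exact absurd ⟨rfl, by omega⟩ hcase
        have : L'[0]? = L[j]? := by
          rw [hL']
          simp only [List.take_zero, List.nil_append, List.getElem?_drop, Nat.add_zero]
        rw [this, ← nodes_getElem?_tail' hw hjlt, ← nodes_getElem?_tail' hw (by omega : 0 < L.length)]
        exact hNij.symm
      · rw [hL', List.getElem?_append_left (by omega), List.getElem?_take, if_pos (by omega)]
    have hdst' : G.dst L' = G.dst L := by
      rw [dst_eq, dst_eq, hlen']
      by_cases hjL' : j = L.length
      · have hi1 : 1 ≤ i := by
          rcases Nat.eq_zero_or_pos i with h | h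
          · exact absurd ⟨h, hjL'⟩ hcase
          · omega
        have hdropnil : L.drop j = [] := by rw [hjL']; simp
        have : L'[i + (L.length - j) - 1]? = L[i-1]? := by
          rw [hL', hdropnil, List.append_nil, List.getElem?_take, if_pos (by omega)]
          congr 1
          omega
        rw [this, ← nodes_getElem?_head' (G := G) L (by omega : 0 < i),
          ← nodes_getElem?_head' (G := G) L (by omega : 0 < L.length), ← hjL', hNij]
      · have hjlt : j < L.length := by omega
        have : L'[i + (L.length - j) - 1]? = L[L.length - 1]? := by
          rw [hL', List.getElem?_append_right (by omega), htl, List.getElem?_drop]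
          congr 1
          omega
        rw [this]
    have hlen2 : L'.length ≤ n := by rw [hlen']; omega
    rcases ih L' hlen2 hwalk' hne' with h | ⟨S, h1, h2, h3, h4, h5⟩
    · left; rw [← hsrc', ← hdst', h]
    · right; exact ⟨S, h1, h2, h3.trans hsrc', h4.trans hdst', h5⟩


lemma nodes_first {S : List E} (hne : S ≠ []) : (G.nodes S)[0]? = G.src S := by
  rw [nodes_getElem?_zero hne, src_eq]

lemma nodes_last {S : List E} (hne : S ≠ []) : (G.nodes S)[S.length]? = G.dst S := by
  rw [nodes_getElem?_head' (G := G) S (by simpa using List.length_pos_iff.mpr hne), dst_eq]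

lemma reaches_simple {u v : V}
    (h : u = v ∨ ∃ L, G.IsWalk L ∧ G.src L = some u ∧ G.dst L = some v) :
    u = v ∨ ∃ S, G.IsWalk S ∧ S ≠ [] ∧ G.src S = some u ∧ G.dst S = some v ∧
      (G.nodes S).Nodup := by
  rcases h with rfl | ⟨L, hw, hs, hd⟩
  · exact Or.inl rfl
  · have hne : L ≠ [] := by rintro rfl; simp [src] at hs
    rcases exists_nodup_walk L.length L le_rfl hw hne with h | ⟨S, h1, h2, h3, h4, h5⟩
    · left
      have := (hs.symm.trans h).trans hd
      exact Option.some_injective _ this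
    · exact Or.inr ⟨S, h1, h2, h3.trans hs, h4.trans hd, h5⟩

lemma nodes_concat {S : List E} (hne : S ≠ []) (f : E) :
    G.nodes (S ++ [f]) = G.nodes S ++ [G.head f] := by
  cases S with
  | nil => simp at hne
  | cons a T => simp [nodes]

lemma exists_Q_join {e f : E} (v : V) (hv : G.head e = v) (hfe : f ≠ e) (hfv : G.head f = v)
    (hreach : v = G.tail f ∨ ∃ L, G.IsWalk L ∧ G.src L = some v ∧ G.dst L = some (G.tail f)) :
    ∃ Q : List E, G.IsWalk Q ∧ G.IsPath Q ∧ Q ≠ [] ∧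
      G.src Q = some v ∧ Q.getLast? = some f ∧
      (∀ k (hk : k + 1 < Q.length), G.head (Q[k]'(by omega)) ≠ v) := by
  rcases reaches_simple hreach with heq | ⟨S, hSw, hSne, hSsrc, hSdst, hSnd⟩
  · refine ⟨[f], ?_, ?_, by simp, by simp [src, heq], by simp, by simp⟩
    · simp [IsWalk, List.Chain']
    · constructor
      · simp [IsWalk, List.Chain']
      · constructor <;> simp [nodes]
  · refine ⟨S ++ [f], ?_, ?_, by simp, ?_, by simp, ?_⟩
    case _ =>
      -- walk
      rw [IsWalk, List.Chain', List.isChain_append]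
      refine ⟨hSw, List.isChain_singleton f, ?_⟩
      intro x hx y hy
      simp only [List.head?_cons, Option.mem_def, Option.some.injEq] at hy
      subst hy
      rw [Option.mem_def] at hx
      have : G.dst S = some (G.head x) := by rw [dst, hx]; rfl
      have := this.symm.trans hSdst
      exact Option.some_injective _ this
    case _ =>
      -- path
      have hnodes : G.nodes (S ++ [f]) = G.nodes S ++ [G.head f] := nodes_concat hSne f
      refine ⟨?_, ?_, ?_⟩
      · rw [IsWalk, List.Chain', List.isChain_append]
        refine ⟨hSw, List.isChain_singleton f, ?_⟩
        intro x hx y hy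
        simp only [List.head?_cons, Option.mem_def, Option.some.injEq] at hy
        subst hy
        rw [Option.mem_def] at hx
        have : G.dst S = some (G.head x) := by rw [dst, hx]; rfl
        have := this.symm.trans hSdst
        exact Option.some_injective _ this
      · rw [hnodes, List.dropLast_concat]
        exact hSnd
      · rw [hnodes]
        have hNSne : G.nodes S ≠ [] := by
          apply List.ne_nil_of_length_pos
          rw [nodes_length hSne]; omega
        rw [List.tail_append, if_neg (by simpa using hNSne)]
        rw [List.nodup_append]
        refine ⟨hSnd.sublist (List.tail_sublist _) , List.nodup_singleton _, ?_⟩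
        intro x hx y hx2 hxy; subst hxy
        simp only [List.mem_singleton] at hx2
        subst hx2
        -- head f = v is the first node of nodes S; can't be in tail by nodup
        have h0 : (G.nodes S).head? = some v := by
          rw [List.head?_eq_getElem?, nodes_first hSne, hSsrc]
        have : G.nodes S = v :: (G.nodes S).tail := (List.cons_head?_tail h0).symm
        rw [this, List.nodup_cons] at hSnd
        rw [hfv] at hx
        exact hSnd.1 hx
    case _ =>
      -- src
      rw [src_eq, List.getElem?_append_left (List.length_pos_iff.mpr hSne), ← src_eq]
      exact hSsrc
    case _ =>
      -- dagger
      intro k hk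
      have hkS : k < S.length := by simpa using hk
      have h1 : (G.nodes S)[k+1]? = some (G.head (S[k]'hkS)) := by
        rw [nodes_getElem?_succ, List.getElem?_eq_getElem hkS]; rfl
      have h0 : (G.nodes S)[0]? = some v := by rw [nodes_first hSne, hSsrc]
      have hne01 : (G.nodes S)[0]? ≠ (G.nodes S)[k+1]? := by
        refine List.nodup_iff_getElem?_ne_getElem?.mp hSnd 0 (k+1) (by omega) ?_
        rw [nodes_length hSne]; omega
      have helem : ((S ++ [f])[k]'(by omega)) = S[k]'hkS := by
        exact List.getElem_append_left hkS
      rw [helem]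
      intro hc
      rw [h0, h1, hc] at hne01
      exact hne01 rfl

lemma nodes_cons' {S : List E} (hne : S ≠ []) (f : E) (hsrc : G.src S = some (G.head f)) :
    G.nodes (f :: S) = G.tail f :: G.nodes S := by
  cases S with
  | nil => simp at hne
  | cons a T =>
    have : G.tail a = G.head f := by
      rw [src] at hsrc
      simpa using hsrc
    simp [nodes, this]

lemma exists_Q_split {e f : E} (u : V) (hu : G.tail e = u) (hfe : f ≠ e) (hfu : G.tail f = u)
    (hreach : G.head f = u ∨ ∃ L, G.IsWalk L ∧ G.src L = some (G.head f) ∧ G.dst L = some u) :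
    ∃ Q : List E, G.IsWalk Q ∧ G.IsPath Q ∧ Q ≠ [] ∧
      G.dst Q = some u ∧ Q.head? = some f ∧
      (∀ k (hk0 : 0 < k) (hk : k < Q.length), G.tail (Q[k]'hk) ≠ u) := by
  rcases reaches_simple hreach with heq | ⟨S, hSw, hSne, hSsrc, hSdst, hSnd⟩
  · refine ⟨[f], by simp [IsWalk, List.Chain'], ?_, by simp, by simp [dst, heq], by simp, ?_⟩
    · refine ⟨by simp [IsWalk, List.Chain'], ?_, ?_⟩ <;> simp [nodes]
    · intro k hk0 hk; simp at hk; omega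
  · have hnodes : G.nodes (f :: S) = G.tail f :: G.nodes S := nodes_cons' hSne f hSsrc
    have hNSlen : (G.nodes S).length = S.length + 1 := nodes_length hSne
    have hSlen : 0 < S.length := List.length_pos_iff.mpr hSne
    have hlast : (G.nodes S)[S.length]? = some u := by rw [nodes_last hSne, hSdst]
    have hwalk : G.IsWalk (f :: S) := by
      cases S with
      | nil => simp at hSne
      | cons a T =>
        rw [IsWalk, List.Chain', List.isChain_cons_cons]
        refine ⟨?_, hSw⟩
        rw [src] at hSsrc
        simpa using (Option.some_injective _ (by simpa using hSsrc)).symm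
    refine ⟨f :: S, hwalk, ?_, by simp, ?_, by simp, ?_⟩
    · -- path
      refine ⟨hwalk, ?_, ?_⟩
      · rw [hnodes, List.dropLast_cons_of_ne_nil (by
          apply List.ne_nil_of_length_pos; omega)]
        rw [List.nodup_cons]
        constructor
        · -- tail f = u not in dropLast (nodes S)
          rw [hfu]
          intro hmem
          obtain ⟨m, hm, hval⟩ := List.getElem_of_mem hmem
          have hmlen : ((G.nodes S).dropLast).length = S.length := by
            rw [List.length_dropLast, hNSlen]; omega
          have hm' : m < S.length := by omega
          have h1 : (G.nodes S)[m]? = some u := by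
            have : ((G.nodes S).dropLast)[m]? = some u := by
              rw [List.getElem?_eq_getElem hm, hval]
            rw [List.dropLast_eq_take, List.getElem?_take, if_pos (by omega)] at this
            exact this
          have := List.nodup_iff_getElem?_ne_getElem?.mp hSnd m S.length (by omega) (by omega)
          rw [h1, hlast] at this
          exact this rfl
        · exact hSnd.sublist (List.dropLast_sublist _)
      · rw [hnodes, List.tail_cons]
        exact hSnd
    · -- dst
      cases S with
      | nil => simp at hSne
      | cons a T =>
        rw [dst, List.getLast?_cons_cons]
        exact hSdst
    · -- dagger
      intro k hk0 hk
      have hkS : k - 1 < S.length := by simp at hk; omega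
      have helem0 : (f :: S)[k]? = S[k-1]? := by
        rw [show k = (k-1)+1 from by omega, List.getElem?_cons_succ]
        congr 2
        omega
      rw [List.getElem?_eq_getElem hk, List.getElem?_eq_getElem hkS] at helem0
      have helem := Option.some_injective _ helem0
      rw [helem]
      have h1 : (G.nodes S)[k-1]? = some (G.tail (S[k-1]'hkS)) := nodes_getElem?_of_walk hSw hkS
      have hne2 := List.nodup_iff_getElem?_ne_getElem?.mp hSnd (k-1) S.length (by omega) (by omega)
      rw [h1, hlast] at hne2
      intro hc
      rw [hc] at hne2
      exact hne2 rfl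

lemma getElem_congr' {l : List E} {i j : ℕ} (h : i = j) (hi : i < l.length) :
    l[i]'hi = l[j]'(h ▸ hi) := by subst h; rfl

lemma take_sublist_take {α : Type*} (N : List α) {a b : ℕ} (h : a ≤ b) :
    (N.take a).Sublist (N.take b) := by
  have : N.take a = (N.take b).take a := by rw [List.take_take, inf_eq_left.mpr h]
  rw [this]
  exact List.take_sublist _ _

lemma walk_step? {L : List E} (h : G.IsWalk L) {k : ℕ} (hk : k + 1 < L.length) :
    (L[k]?).map G.head = (L[k+1]?).map G.tail := by
  rw [List.getElem?_eq_getElem (by omega : k < L.length), List.getElem?_eq_getElem hk]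
  simp [walk_step h hk]

lemma nodes_drop {Q : List E} (h : G.IsWalk Q) {k : ℕ} (hk : k < Q.length) :
    G.nodes (Q.drop k) = (G.nodes Q).drop k := by
  apply List.ext_getElem?
  intro n
  rw [List.getElem?_drop]
  cases n with
  | zero =>
    have hdne : Q.drop k ≠ [] := by
      apply List.ne_nil_of_length_pos
      rw [List.length_drop]; omega
    rw [nodes_getElem?_zero hdne, List.getElem?_drop, nodes_getElem?_tail' h (by omega : k + 0 < Q.length)]
  | succ n =>
    rw [nodes_getElem?_succ, List.getElem?_drop,
      nodes_getElem?_head' (G := G) Q (by omega : 0 < k + (n+1))]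
    congr 2 <;> omega

lemma nodes_take {Q : List E} (h : G.IsWalk Q) {k : ℕ} (hk0 : 0 < k) :
    G.nodes (Q.take k) = (G.nodes Q).take (k+1) := by
  rcases eq_or_ne Q [] with rfl | hQne
  · simp [nodes]
  apply List.ext_getElem?
  intro n
  rw [List.getElem?_take]
  cases n with
  | zero =>
    rw [if_pos (by omega)]
    have htne : Q.take k ≠ [] := by
      apply List.ne_nil_of_length_pos
      rw [List.length_take]
      have := List.length_pos_iff.mpr hQne
      omega
    rw [nodes_getElem?_zero htne, nodes_getElem?_zero hQne, List.getElem?_take, if_pos hk0]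
  | succ n =>
    rw [nodes_getElem?_succ, List.getElem?_take]
    by_cases hnk : n < k
    · rw [if_pos hnk, if_pos (by omega), nodes_getElem?_succ]
    · rw [if_neg hnk, if_neg (by omega)]
      rfl

lemma isPath_drop {Q : List E} (hp : G.IsPath Q) {k : ℕ} (hk : k < Q.length) :
    G.IsPath (Q.drop k) := by
  obtain ⟨hw, h1, h2⟩ := hp
  refine ⟨hw.drop k, ?_, ?_⟩
  · rw [nodes_drop hw hk]
    have heq : ((G.nodes Q).drop k).dropLast = ((G.nodes Q).dropLast).drop k := by
      rw [List.dropLast_eq_take, List.dropLast_eq_take, List.drop_take, List.length_drop]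
      congr 1
      omega
    rw [heq]
    exact h1.sublist (List.drop_sublist _ _)
  · rw [nodes_drop hw hk, List.tail_drop]
    have heq : (G.nodes Q).drop (k+1) = ((G.nodes Q).tail).drop k := by
      rw [← List.drop_one, List.drop_drop]
      congr 1
      omega
    rw [heq]
    exact h2.sublist (List.drop_sublist _ _)

lemma isPath_take {Q : List E} (hp : G.IsPath Q) {k : ℕ} (hk0 : 0 < k) :
    G.IsPath (Q.take k) := by
  obtain ⟨hw, h1, h2⟩ := hp
  refine ⟨hw.take k, ?_, ?_⟩
  · rw [nodes_take hw hk0]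
    have hsub : (((G.nodes Q).take (k+1)).dropLast).Sublist ((G.nodes Q).dropLast) := by
      rw [List.dropLast_eq_take, List.dropLast_eq_take, List.take_take, List.length_take]
      exact take_sublist_take _ (by omega)
    exact h1.sublist hsub
  · rw [nodes_take hw hk0]
    have heq : ((G.nodes Q).take (k+1)).tail = ((G.nodes Q).tail).take k := by
      rw [← List.drop_one, ← List.drop_one, List.drop_take]
      congr 1 <;> omega
    rw [heq]
    exact h2.sublist (List.take_sublist _ _)

end MultiDigraph

set_option maxHeartbeats 1000000 in
/-- No omnitig traverses a join arc or a split arc twice. -/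
theorem stmt_11 {V E : Type} [Fintype V] [Fintype E] [DecidableEq E]
    (G : MultiDigraph V E) (hG : G.StronglyConnected)
    (W : List E) (hW : G.IsOmnitig W) (e : E)
    (he : G.JoinArc e ∨ G.SplitArc e) :
    W.count e ≤ 1 := by
  classical
  open MultiDigraph in
  by_contra hcnt
  have h2 : 2 ≤ W.count e := by omega
  obtain ⟨n, m, hnm, hn, hm⟩ :=
    List.duplicate_iff_exists_distinct_get.mp (List.duplicate_iff_two_le_count.mpr h2)
  obtain ⟨hWwalk, homni⟩ := hW
  set p := (n : ℕ) with hp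
  set q := (m : ℕ) with hq'
  have hq : q < W.length := m.isLt
  have hpq : p < q := hnm
  have hWp : W[p]? = some e := by
    rw [List.getElem?_eq_getElem (by omega : p < W.length)]
    simp only [List.get_eq_getElem] at hn
    rw [← hn]
  have hWq : W[q]? = some e := by
    rw [List.getElem?_eq_getElem hq]
    simp only [List.get_eq_getElem] at hm
    rw [← hm]
  rcases he with hjoin | hsplit
  · -- JOIN CASE
    set v := G.head e with hv
    obtain ⟨f, hfe, hfv⟩ : ∃ f : E, f ≠ e ∧ G.head f = v := by
      rw [MultiDigraph.JoinArc, MultiDigraph.inDeg] at hjoin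
      have hnt : Nontrivial {a : E // G.head a = v} :=
        (Finite.one_lt_card_iff_nontrivial).mp hjoin
      obtain ⟨b, hb⟩ := exists_ne (⟨e, rfl⟩ : {a : E // G.head a = v})
      exact ⟨b.1, fun hh => hb (Subtype.ext hh), b.2⟩
    obtain ⟨Q, hQw, hQp, hQne, hQsrc, hQlast, hQdag⟩ :=
      MultiDigraph.exists_Q_join v hv.symm hfe hfv (hG v (G.tail f))
    have hlQ : 0 < Q.length := List.length_pos_iff.mpr hQne
    have hQlast? : Q[Q.length - 1]? = some f := by
      rw [← List.getLast?_eq_getElem?]; exact hQlast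
    have main : ∀ (d a : ℕ) (_ : p ≤ a) (ha2 : a < q), G.head (W[a]'(by omega)) = v → q - a ≤ d → False := by
      intro d
      induction d with
      | zero => intro a _ h2 _ h4; omega
      | succ d ih =>
        intro a ha1 ha2 ha3 ha4
        by_cases hdiv : ∃ k, k < Q.length ∧ a + 1 + k ≤ q ∧ Q[k]? ≠ W[a+1+k]?
        · set k := Nat.find hdiv with hk
          obtain ⟨hk1, hk2, hk3⟩ := Nat.find_spec hdiv
          have hmin : ∀ k' < k, Q[k']? = W[a+1+k']? := by
            intro k' hk'
            have := Nat.find_min hdiv hk'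
            push_neg at this
            exact this (by omega) (by omega)
          have hjW : a + 1 + k < W.length := by omega
          -- source match (option level)
          have hsrcmatch : (Q[k]?).map G.tail = (W[a+1+k]?).map G.tail := by
            rcases Nat.eq_zero_or_pos k with hk0 | hkpos
            · have h1 : (Q[k]?).map G.tail = some v := by
                rw [hk0, ← MultiDigraph.src_eq, hQsrc]
              have h2 : (W[a+1+k]?).map G.tail = some (G.head (W[a]'(by omega))) := by
                rw [hk0]
                have := MultiDigraph.walk_step? hWwalk (by omega : a + 1 < W.length)
                rw [← this, List.getElem?_eq_getElem (by omega : a < W.length)]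
                rfl
              rw [h1, h2, ha3]
            · have h1 : (Q[k]?).map G.tail = (Q[k-1]?).map G.head := by
                have := MultiDigraph.walk_step? hQw (by omega : (k-1) + 1 < Q.length)
                rw [show k - 1 + 1 = k from by omega] at this
                exact this.symm
              have h2 : (Q[k-1]?).map G.head = (W[a+1+(k-1)]?).map G.head := by
                rw [hmin (k-1) (by omega)]
              have h3 : (W[a+1+(k-1)]?).map G.head = (W[a+1+(k-1)+1]?).map G.tail :=
                MultiDigraph.walk_step? hWwalk (by omega)
              rw [h1, h2, h3, show a+1+(k-1)+1 = a+1+k from by omega]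
          refine homni (p+1) (a+1+k) (by omega) (by omega) hjW
            ⟨Q.drop k, MultiDigraph.isPath_drop hQp hk1, ?_, ?_, ?_, ?_, ?_⟩
          · apply List.ne_nil_of_length_pos
            rw [List.length_drop]; omega
          · -- src
            rw [MultiDigraph.src_eq, List.getElem?_drop, Nat.add_zero,
              List.getElem?_eq_getElem (by omega : a+1+k < W.length)] at *
            rw [show (Q[k]?).map G.tail = some (G.tail (W[a+1+k]'hjW)) from hsrcmatch]
          · -- dst
            rw [MultiDigraph.dst_eq, List.length_drop, List.getElem?_drop]
            rw [show k + (Q.length - k - 1) = Q.length - 1 from by omega, hQlast?]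
            have hWpa : W[(p+1)-1]'(by omega) = e := by
              have := hWp
              rw [List.getElem?_eq_getElem (by omega : p < W.length)] at this
              have h' := Option.some_injective _ this
              exact (MultiDigraph.getElem_congr' (show (p+1)-1 = p from by omega) (by omega)).trans h'
            rw [hWpa]
            simp [hfv]; exact hv
          · -- head? ≠
            rw [List.head?_eq_getElem?, List.getElem?_drop, Nat.add_zero]
            intro hc
            rw [List.getElem?_eq_getElem hjW] at hk3
            exact hk3 hc
          · -- getLast? ≠
            rw [List.getLast?_eq_getElem?, List.length_drop, List.getElem?_drop,
              show k + (Q.length - k - 1) = Q.length - 1 from by omega, hQlast?]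
            have hWpa : W[(p+1)-1]'(by omega) = e := by
              have := hWp
              rw [List.getElem?_eq_getElem (by omega : p < W.length)] at this
              have h' := Option.some_injective _ this
              exact (MultiDigraph.getElem_congr' (show (p+1)-1 = p from by omega) (by omega)).trans h'
            rw [hWpa]
            intro hc
            exact hfe (Option.some_injective _ hc)
        · push_neg at hdiv
          by_cases hc : a + Q.length ≤ q
          · have hfull : Q[Q.length - 1]? = W[a+1+(Q.length - 1)]? := hdiv _ (by omega) (by omega)
            rw [hQlast?, show a+1+(Q.length-1) = a + Q.length from by omega] at hfull
            rcases eq_or_lt_of_le hc with heq | hlt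
            · rw [heq, hWq] at hfull
              exact hfe (Option.some_injective _ hfull.symm).symm
            · refine ih (a + Q.length) (by omega) hlt ?_ (by omega)
              have : W[a + Q.length]? = some (W[a+Q.length]'(by omega)) :=
                List.getElem?_eq_getElem (by omega)
              rw [this] at hfull
              have := Option.some_injective _ hfull
              rw [← this, hfv]
          · have hk0 : q - a - 1 < Q.length := by omega
            have hfull : Q[q - a - 1]? = W[a+1+(q-a-1)]? := hdiv _ hk0 (by omega)
            rw [show a+1+(q-a-1) = q from by omega, hWq,
              List.getElem?_eq_getElem hk0] at hfull
            have helem := Option.some_injective _ hfull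
            have hdag := hQdag (q-a-1) (by omega)
            rw [helem] at hdag
            exact hdag hv.symm
    exact main (q - p) p le_rfl hpq (by
      have := hWp
      rw [List.getElem?_eq_getElem (by omega : p < W.length)] at this
      rw [Option.some_injective _ this]) le_rfl
  · -- SPLIT CASE
    set u := G.tail e with hu
    obtain ⟨f, hfe, hfu⟩ : ∃ f : E, f ≠ e ∧ G.tail f = u := by
      rw [MultiDigraph.SplitArc, MultiDigraph.outDeg] at hsplit
      have hnt : Nontrivial {a : E // G.tail a = u} :=
        (Finite.one_lt_card_iff_nontrivial).mp hsplit
      obtain ⟨b, hb⟩ := exists_ne (⟨e, rfl⟩ : {a : E // G.tail a = u})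
      exact ⟨b.1, fun hh => hb (Subtype.ext hh), b.2⟩
    obtain ⟨Q, hQw, hQp, hQne, hQdst, hQhead, hQdag⟩ :=
      MultiDigraph.exists_Q_split u hu.symm hfe hfu (hG (G.head f) u)
    have hlQ : 0 < Q.length := List.length_pos_iff.mpr hQne
    have hQhead? : Q[0]? = some f := by
      rw [← List.head?_eq_getElem?]; exact hQhead
    have hWq' : W[q]'hq = e := by
      have := hWq
      rw [List.getElem?_eq_getElem hq] at this
      exact Option.some_injective _ this
    have main : ∀ (d b : ℕ) (_ : p < b) (hb2 : b ≤ q), G.tail (W[b]'(by omega)) = u → b ≤ d → False := by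
      intro d
      induction d with
      | zero => intro b h1 _ _ h4; omega
      | succ d ih =>
        intro b hb1 hb2 hb3 hb4
        by_cases hdiv : ∃ s, s < Q.length ∧ s ≤ b - 1 - p ∧ Q[Q.length - 1 - s]? ≠ W[b-1-s]?
        · set s := Nat.find hdiv with hs
          obtain ⟨hs1, hs2, hs3⟩ := Nat.find_spec hdiv
          have hmin : ∀ s' < s, Q[Q.length - 1 - s']? = W[b-1-s']? := by
            intro s' hs'
            have := Nat.find_min hdiv hs'
            push_neg at this
            exact this (by omega) (by omega)
          have hbW : b - 1 - s < W.length := by omega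
          -- dst match (option level)
          have hdstmatch : (Q[Q.length - 1 - s]?).map G.head = (W[b-1-s]?).map G.head := by
            rcases Nat.eq_zero_or_pos s with hs0 | hspos
            · have h1 : (Q[Q.length - 1 - s]?).map G.head = some u := by
                rw [hs0, Nat.sub_zero, ← MultiDigraph.dst_eq, hQdst]
              have h2 : (W[b-1-s]?).map G.head = some (G.tail (W[b]'(by omega))) := by
                rw [hs0, Nat.sub_zero]
                have := MultiDigraph.walk_step? hWwalk (by omega : (b-1) + 1 < W.length)
                rw [show b - 1 + 1 = b from by omega] at this
                rw [this, List.getElem?_eq_getElem (by omega : b < W.length)]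
                rfl
              rw [h1, h2, hb3]
            · have h1 : (Q[Q.length - 1 - s]?).map G.head = (Q[Q.length - 1 - (s-1)]?).map G.tail := by
                have := MultiDigraph.walk_step? hQw (by omega : (Q.length - 1 - s) + 1 < Q.length)
                rw [show Q.length - 1 - s + 1 = Q.length - 1 - (s - 1) from by omega] at this
                exact this
              have h2 : (Q[Q.length - 1 - (s-1)]?).map G.tail = (W[b-1-(s-1)]?).map G.tail := by
                rw [hmin (s-1) (by omega)]
              have h3 : (W[b-1-(s-1)]?).map G.tail = (W[b-1-s]?).map G.head := by
                have := MultiDigraph.walk_step? hWwalk (by omega : (b-1-s) + 1 < W.length)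
                rw [show b - 1 - s + 1 = b - 1 - (s-1) from by omega] at this
                exact this.symm
              rw [h1, h2, h3]
          refine homni (b-s) q (by omega) (by omega) hq
            ⟨Q.take (Q.length - s), MultiDigraph.isPath_take hQp (by omega), ?_, ?_, ?_, ?_, ?_⟩
          · apply List.ne_nil_of_length_pos
            rw [List.length_take]; omega
          · -- src
            rw [MultiDigraph.src_eq, List.getElem?_take, if_pos (by omega), hQhead?]
            have hWqe : W[q]'hq = e := hWq'
            rw [hWqe]
            simp [hfu, hfe]; exact hu
          · -- dst
            rw [MultiDigraph.dst_eq, List.length_take,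
              show min (Q.length - s) Q.length - 1 = Q.length - 1 - s from by omega,
              List.getElem?_take, if_pos (by omega)]
            rw [show (Q[Q.length - 1 - s]?).map G.head = (W[b-1-s]?).map G.head from hdstmatch,
              List.getElem?_eq_getElem hbW]
            have : W[b-1-s]'hbW = W[(b-s)-1]'(by omega) :=
              MultiDigraph.getElem_congr' (by omega) hbW
            rw [this]
            rfl
          · -- head? ≠
            rw [List.head?_eq_getElem?, List.getElem?_take, if_pos (by omega), hQhead?]
            rw [hWq']
            intro hc
            exact hfe (Option.some_injective _ hc)
          · -- getLast? ≠
            rw [List.getLast?_eq_getElem?, List.length_take,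
              show min (Q.length - s) Q.length - 1 = Q.length - 1 - s from by omega,
              List.getElem?_take, if_pos (by omega)]
            intro hc
            apply hs3
            rw [hc, List.getElem?_eq_getElem hbW]
            congr 1
            exact (MultiDigraph.getElem_congr' (by omega) (by omega)).symm
        · push_neg at hdiv
          by_cases hc : Q.length ≤ b - p
          · have hfull : Q[Q.length - 1 - (Q.length - 1)]? = W[b-1-(Q.length-1)]? :=
              hdiv _ (by omega) (by omega)
            rw [show Q.length - 1 - (Q.length - 1) = 0 from by omega, hQhead?,
              show b - 1 - (Q.length - 1) = b - Q.length from by omega] at hfull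
            rcases eq_or_lt_of_le (show p ≤ b - Q.length from by omega) with heq | hlt
            · rw [← heq, hWp] at hfull
              exact hfe (Option.some_injective _ hfull)
            · refine ih (b - Q.length) hlt (by omega) ?_ (by omega)
              have : W[b - Q.length]? = some (W[b - Q.length]'(by omega)) :=
                List.getElem?_eq_getElem (by omega)
              rw [this] at hfull
              have := Option.some_injective _ hfull
              rw [← this, hfu]
          · have hs0 : b - 1 - p < Q.length := by omega
            have hfull : Q[Q.length - 1 - (b-1-p)]? = W[b-1-(b-1-p)]? := hdiv _ hs0 (by omega)
            rw [show b - 1 - (b-1-p) = p from by omega, hWp,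
              List.getElem?_eq_getElem (by omega : Q.length - 1 - (b-1-p) < Q.length)] at hfull
            have helem := Option.some_injective _ hfull
            have hdag := hQdag (Q.length - 1 - (b-1-p)) (by omega) (by omega)
            rw [helem] at hdag
            exact hdag hu.symm
    refine main q q hpq le_rfl ?_ le_rfl
    rw [hWq']
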